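/- Given a real n_y×n_s matrix R_s with rank(R_s) = n_s = n_y and a real n_y×n_f matrix R_f with rank(R_f) = n_f ≤ n_y, there exist an invertible real n_y×n_y matrix X, real orthogonal matrices U_s (n_s×n_s) and U_f (n_f×n_f), and diagonal n_f×n_f matrices Σ_s = diag(σ_{s,1},…,σ_{s,n_f}) and Σ_f = diag(σ_{f,1},…,σ_{f,n_f}) with strictly positive diagonal entries satisfying σ_{s,i}² + σ_{f,i}² = 1 for every i, such that R_s = X·[[Σ_s, 0],[0, I_{n_y−n_f}]]·U_sᵀ and R_f = X·[[Σ_f],[0]]·U_fᵀ. -/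

import Mathlib

open Matrix

private lemma isUnit_of_rank_eq_card {n : Type*} [Fintype n] [DecidableEq n]
    (A : Matrix n n ℝ) (h : A.rank = Fintype.card n) : IsUnit A := by
  rw [← Matrix.mulVec_injective_iff_isUnit]
  have h2 := LinearMap.finrank_range_add_finrank_ker A.mulVecLin
  rw [Module.finrank_pi] at h2
  have hr : Module.finrank ℝ (LinearMap.range A.mulVecLin) = Fintype.card n := h
  have hker : Module.finrank ℝ (LinearMap.ker A.mulVecLin) = 0 := by omega
  have hinj : Function.Injective A.mulVecLin :=
    LinearMap.ker_eq_bot.mp (Submodule.finrank_eq_zero.mp hker)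
  intro x y hxy
  exact hinj (by simpa using hxy)

/-- **GSVD existence** (Theorem 1 of the paper, adapted to spatial response
matrices). Here the output dimension is `n_y = nf + k`, realised as the index
type `Fin nf ⊕ Fin k`; the slow array has `n_s = n_y` actuators and the fast
array has `n_f = nf ≤ n_y` actuators. -/
theorem gsvd_existence (nf k : ℕ)
    (Rs : Matrix (Fin nf ⊕ Fin k) (Fin nf ⊕ Fin k) ℝ)
    (Rf : Matrix (Fin nf ⊕ Fin k) (Fin nf) ℝ)
    (hRs : Rs.rank = nf + k) (hRf : Rf.rank = nf) :
    ∃ (X Us : Matrix (Fin nf ⊕ Fin k) (Fin nf ⊕ Fin k) ℝ)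
      (Uf : Matrix (Fin nf) (Fin nf) ℝ) (σs σf : Fin nf → ℝ),
      IsUnit X ∧
      Usᵀ * Us = 1 ∧
      Ufᵀ * Uf = 1 ∧
      (∀ i, 0 < σs i) ∧
      (∀ i, 0 < σf i) ∧
      (∀ i, σs i ^ 2 + σf i ^ 2 = 1) ∧
      Rs = X * fromBlocks (diagonal σs) 0 0 (1 : Matrix (Fin k) (Fin k) ℝ) * Usᵀ ∧
      Rf = X * fromRows (diagonal σf) (0 : Matrix (Fin k) (Fin nf) ℝ) * Ufᵀ := by
  classical
  -- Rs is invertible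
  have hRsU : IsUnit Rs := isUnit_of_rank_eq_card Rs (by simp [hRs])
  have hRsdet : IsUnit Rs.det := (isUnit_iff_isUnit_det Rs).mp hRsU
  set M : Matrix (Fin nf ⊕ Fin k) (Fin nf) ℝ := Rs⁻¹ * Rf with hMdef
  have hRsinvdet : IsUnit (Rs⁻¹).det := Matrix.isUnit_nonsing_inv_det Rs hRsdet
  have hMrank : M.rank = nf :=
    (Matrix.rank_mul_eq_right_of_isUnit_det Rs⁻¹ Rf hRsinvdet).trans hRf
  -- the Gram matrix of M
  set A : Matrix (Fin nf) (Fin nf) ℝ := Mᵀ * M with hAdef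
  have hAH : A.IsHermitian := by
    rw [Matrix.IsHermitian, Matrix.conjTranspose_eq_transpose_of_trivial,
      Matrix.transpose_mul, Matrix.transpose_transpose]
  have hAU : IsUnit A := isUnit_of_rank_eq_card A
    (by rw [hAdef, Matrix.rank_transpose_mul_self, hMrank]; simp)
  have hPSD : A.PosSemidef := by
    have := Matrix.posSemidef_conjTranspose_mul_self M
    rwa [Matrix.conjTranspose_eq_transpose_of_trivial] at this
  set μ : Fin nf → ℝ := hAH.eigenvalues with hμdef
  have hμpos : ∀ i, 0 < μ i := by
    intro i
    refine lt_of_le_of_ne (hPSD.eigenvalues_nonneg i) (Ne.symm ?_)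
    intro h0
    have hdet : A.det ≠ 0 := ((isUnit_iff_isUnit_det A).mp hAU).ne_zero
    apply hdet
    rw [hAH.det_eq_prod_eigenvalues]
    exact Finset.prod_eq_zero (Finset.mem_univ i) (by exact_mod_cast h0)
  set Uf : Matrix (Fin nf) (Fin nf) ℝ := (hAH.eigenvectorUnitary : Matrix (Fin nf) (Fin nf) ℝ)
    with hUfdef
  have hstarUf : star Uf = Ufᵀ :=
    (Matrix.star_eq_conjTranspose Uf).trans (Matrix.conjTranspose_eq_transpose_of_trivial Uf)
  have hUfl : Ufᵀ * Uf = 1 := by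
    rw [← hstarUf]; exact Matrix.mem_unitaryGroup_iff'.mp hAH.eigenvectorUnitary.2
  have hUfr : Uf * Ufᵀ = 1 := by
    rw [← hstarUf]; exact Matrix.mem_unitaryGroup_iff.mp hAH.eigenvectorUnitary.2
  have hspec : A = Uf * diagonal μ * Ufᵀ := by
    have := hAH.spectral_theorem
    rw [Unitary.conjStarAlgAut_apply] at this
    rwa [hstarUf, RCLike.ofReal_real_eq_id, Function.id_comp] at this
  have hdiag : Ufᵀ * A * Uf = diagonal μ := by
    rw [hspec]
    calc Ufᵀ * (Uf * diagonal μ * Ufᵀ) * Uf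
        = (Ufᵀ * Uf) * diagonal μ * (Ufᵀ * Uf) := by
          simp only [Matrix.mul_assoc]
      _ = diagonal μ := by rw [hUfl, Matrix.one_mul, Matrix.mul_one]
  -- singular values
  set Sg : Fin nf → ℝ := fun i => Real.sqrt (μ i) with hSgdef
  have hSgpos : ∀ i, 0 < Sg i := fun i => Real.sqrt_pos.mpr (hμpos i)
  have hSgne : ∀ i, Sg i ≠ 0 := fun i => (hSgpos i).ne'
  have hSgsq : ∀ i, Sg i * Sg i = μ i := fun i => Real.mul_self_sqrt (hμpos i).le
  -- the orthonormal columns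
  set Qm : Matrix (Fin nf ⊕ Fin k) (Fin nf) ℝ := M * Uf * diagonal (fun i => (Sg i)⁻¹)
    with hQmdef
  have hQQ : Qmᵀ * Qm = 1 := by
    have h1 : Qmᵀ * Qm
        = diagonal (fun i => (Sg i)⁻¹) * (Ufᵀ * (Mᵀ * M) * Uf) * diagonal (fun i => (Sg i)⁻¹) := by
      simp only [hQmdef, Matrix.transpose_mul, Matrix.diagonal_transpose, Matrix.mul_assoc]
    rw [h1, ← hAdef, hdiag, Matrix.diagonal_mul_diagonal, Matrix.diagonal_mul_diagonal]
    have h2 : (fun i => (Sg i)⁻¹ * μ i * (Sg i)⁻¹) = fun _ => (1:ℝ) := by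
      funext i
      rw [← hSgsq i]
      field_simp
      rw [div_self (hSgne i)]
    rw [h2, Matrix.diagonal_one]
  -- extend the columns of Qm to an orthonormal basis
  set v : (Fin nf ⊕ Fin k) → EuclideanSpace ℝ (Fin nf ⊕ Fin k) :=
    Sum.elim (fun j => (WithLp.equiv 2 _).symm (fun i => Qm i j)) (fun _ => 0) with hvdef
  have horth : Orthonormal ℝ ((Set.range (Sum.inl : Fin nf → Fin nf ⊕ Fin k)).restrict v) := by
    rw [orthonormal_iff_ite]
    rintro ⟨t, j, rfl⟩ ⟨t', j', rfl⟩
    have hent : (Qmᵀ * Qm) j j' = (1 : Matrix (Fin nf) (Fin nf) ℝ) j j' := by rw [hQQ]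
    rw [Matrix.mul_apply] at hent
    simp only [Set.restrict_apply, hvdef, Sum.elim_inl]
    rw [PiLp.inner_apply]
    simp only [Set.restrict_apply, Sum.elim_inl, WithLp.equiv_symm_apply, PiLp.toLp_apply, RCLike.inner_apply, starRingEnd_apply, star_trivial]
    show (∑ i, Qm i j' * Qm i j) = _
    rw [Finset.sum_congr rfl (fun i _ => mul_comm (Qm i j') (Qm i j))]
    rw [show (∑ i, Qm i j * Qm i j') = (1 : Matrix (Fin nf) (Fin nf) ℝ) j j' from by
      rw [← hent]; congr 1]
    simp [Matrix.one_apply, Subtype.ext_iff]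
  obtain ⟨b, hb⟩ := horth.exists_orthonormalBasis_extension_of_card_eq
    (by simp [finrank_euclideanSpace])
  have hbl : ∀ (j : Fin nf) (i : Fin nf ⊕ Fin k), b (Sum.inl j) i = Qm i j := by
    intro j i
    have := hb (Sum.inl j) ⟨j, rfl⟩
    rw [this, hvdef]
    simp [WithLp.equiv_symm_apply]
  -- inner products of basis vectors
  have hkey : ∀ t t', (∑ i, b t i * b t' i) = if t = t' then 1 else 0 := by
    intro t t'
    have := (orthonormal_iff_ite.mp b.orthonormal) t t'
    rw [PiLp.inner_apply] at this
    simpa [RCLike.inner_apply, starRingEnd_apply, mul_comm] using this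
  set Q2 : Matrix (Fin nf ⊕ Fin k) (Fin k) ℝ := Matrix.of fun i j => b (Sum.inr j) i with hQ2def
  set Us : Matrix (Fin nf ⊕ Fin k) (Fin nf ⊕ Fin k) ℝ := fromCols Qm Q2 with hUsdef
  have hQ12 : Qmᵀ * Q2 = 0 := by
    ext j j'
    rw [Matrix.mul_apply]
    simp only [Matrix.transpose_apply, hQ2def, Matrix.of_apply, Matrix.zero_apply]
    rw [show (∑ i, Qm i j * b (Sum.inr j') i) = ∑ i, b (Sum.inl j) i * b (Sum.inr j') i from by
      simp [hbl]]
    simp [hkey]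
  have hQ21 : Q2ᵀ * Qm = 0 := by
    ext j j'
    rw [Matrix.mul_apply]
    simp only [Matrix.transpose_apply, hQ2def, Matrix.of_apply, Matrix.zero_apply]
    rw [show (∑ i, b (Sum.inr j) i * Qm i j') = ∑ i, b (Sum.inr j) i * b (Sum.inl j') i from by
      simp [hbl]]
    simp [hkey]
  have hQ22 : Q2ᵀ * Q2 = 1 := by
    ext j j'
    rw [Matrix.mul_apply]
    simp only [Matrix.transpose_apply, hQ2def, Matrix.of_apply]
    rw [hkey]
    simp [Matrix.one_apply]
  have hUsOrtho : Usᵀ * Us = 1 := by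
    rw [hUsdef, Matrix.transpose_fromCols, Matrix.fromRows_mul_fromCols,
      hQQ, hQ12, hQ21, hQ22, Matrix.fromBlocks_one]
  have hUsdet : IsUnit Us.det := by
    have : Us.det * Us.det = 1 := by
      have := congrArg Matrix.det hUsOrtho
      rwa [Matrix.det_mul, Matrix.det_transpose, Matrix.det_one] at this
    exact isUnit_iff_exists_inv.mpr ⟨_, this⟩
  have hUsU : IsUnit Us := (isUnit_iff_isUnit_det Us).mpr hUsdet
  have hUsr : Us * Usᵀ = 1 := mul_eq_one_comm.mp hUsOrtho
  -- the sigmas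
  set σs : Fin nf → ℝ := fun i => (Real.sqrt (1 + Sg i ^ 2))⁻¹ with hσsdef
  set σf : Fin nf → ℝ := fun i => σs i * Sg i with hσfdef
  have h1Sg : ∀ i, (0:ℝ) < 1 + Sg i ^ 2 := fun i => by positivity
  have hσspos : ∀ i, 0 < σs i := fun i =>
    inv_pos.mpr (Real.sqrt_pos.mpr (h1Sg i))
  have hσfpos : ∀ i, 0 < σf i := fun i => mul_pos (hσspos i) (hSgpos i)
  have hσsq : ∀ i, σs i ^ 2 + σf i ^ 2 = 1 := by
    intro i
    have hne : (1 + Sg i ^ 2) ≠ 0 := (h1Sg i).ne'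
    have hs : σs i ^ 2 = (1 + Sg i ^ 2)⁻¹ := by
      show ((Real.sqrt (1 + Sg i ^ 2))⁻¹ : ℝ) ^ 2 = _
      rw [inv_pow, Real.sq_sqrt (h1Sg i).le]
    show σs i ^ 2 + (σs i * Sg i) ^ 2 = 1
    rw [mul_pow, hs]
    field_simp
  -- the block matrices
  set D : Matrix (Fin nf ⊕ Fin k) (Fin nf ⊕ Fin k) ℝ :=
    fromBlocks (diagonal σs) 0 0 (1 : Matrix (Fin k) (Fin k) ℝ) with hDdef
  have hDdet : IsUnit D.det := by
    rw [hDdef, Matrix.det_fromBlocks_zero₂₁, Matrix.det_one, mul_one, Matrix.det_diagonal]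
    exact (Finset.prod_pos (fun i _ => hσspos i)).ne'.isUnit
  have hDinvD : D⁻¹ * D = 1 := Matrix.nonsing_inv_mul D hDdet
  set X : Matrix (Fin nf ⊕ Fin k) (Fin nf ⊕ Fin k) ℝ := Rs * Us * D⁻¹ with hXdef
  have hXU : IsUnit X := by
    rw [isUnit_iff_isUnit_det, hXdef, Matrix.det_mul, Matrix.det_mul]
    exact (hRsdet.mul hUsdet).mul (Matrix.isUnit_nonsing_inv_det D hDdet)
  refine ⟨X, Us, Uf, σs, σf, hXU, hUsOrtho, hUfl, hσspos, hσfpos, hσsq, ?_, ?_⟩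
  · -- Rs = X * D * Usᵀ
    rw [hXdef]
    calc Rs = Rs * (Us * Usᵀ) := by rw [hUsr, Matrix.mul_one]
      _ = Rs * Us * (D⁻¹ * D) * Usᵀ := by rw [hDinvD, Matrix.mul_one, Matrix.mul_assoc]
      _ = Rs * Us * D⁻¹ * D * Usᵀ := by simp only [Matrix.mul_assoc]
  · -- Rf = X * F * Ufᵀ
    have hDG : D * fromRows (diagonal Sg) (0 : Matrix (Fin k) (Fin nf) ℝ)
        = fromRows (diagonal σf) (0 : Matrix (Fin k) (Fin nf) ℝ) := by
      simp only [hDdef, Matrix.fromBlocks_mul_fromRows, Matrix.mul_zero, Matrix.zero_mul,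
        Matrix.one_mul, add_zero, zero_add, Matrix.diagonal_mul_diagonal, hσfdef]
    have hUsG : Us * fromRows (diagonal Sg) (0 : Matrix (Fin k) (Fin nf) ℝ)
        = Qm * diagonal Sg := by
      rw [hUsdef, Matrix.fromCols_mul_fromRows, Matrix.mul_zero, add_zero]
    have hQmSg : Qm * diagonal Sg = M * Uf := by
      rw [hQmdef, Matrix.mul_assoc, Matrix.diagonal_mul_diagonal]
      rw [show (fun i => (Sg i)⁻¹ * Sg i) = fun _ => (1:ℝ) from funext fun i =>
        inv_mul_cancel₀ (hSgne i), Matrix.diagonal_one, Matrix.mul_one]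
    have hRsM : Rs * M = Rf := by
      rw [hMdef, ← Matrix.mul_assoc, Matrix.mul_nonsing_inv Rs hRsdet, Matrix.one_mul]
    calc Rf = Rs * M := hRsM.symm
      _ = Rs * M * (Uf * Ufᵀ) := by rw [hUfr, Matrix.mul_one]
      _ = Rs * (M * Uf) * Ufᵀ := by simp only [Matrix.mul_assoc]
      _ = Rs * (Qm * diagonal Sg) * Ufᵀ := by rw [hQmSg]
      _ = Rs * (Us * fromRows (diagonal Sg) (0 : Matrix (Fin k) (Fin nf) ℝ)) * Ufᵀ := by rw [hUsG]
      _ = Rs * (Us * (D⁻¹ * D * fromRows (diagonal Sg) (0 : Matrix (Fin k) (Fin nf) ℝ))) * Ufᵀ := by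
          rw [hDinvD, Matrix.one_mul]
      _ = (Rs * Us * D⁻¹) * (D * fromRows (diagonal Sg) (0 : Matrix (Fin k) (Fin nf) ℝ)) * Ufᵀ := by
          simp only [Matrix.mul_assoc]
      _ = X * fromRows (diagonal σf) (0 : Matrix (Fin k) (Fin nf) ℝ) * Ufᵀ := by rw [hDG, hXdef]
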